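/- Let $\nu$ be the counting measure of a summable positive non-increasing sequence $(p_j)$, i.e. $\nu = \sum_j \delta_{p_j}$, and let $V(t) = \int_0^\infty (e^{-tx} - e^{-2tx})\,\nu(dx)$. Then $V(t) = t \int_0^\infty e^{-tx}\, \Delta\nu(x)\, dx$ for all $t \ge 0$, where $\Delta\nu(x) = \#\{j : x/2 < p_j \le x\}$. -/

import Mathlib

open Real Set MeasureTheory

theorem stmt5 (p : ℕ → ℝ) (hpos : ∀ j, 0 < p j) (hmono : ∀ j, p (j + 1) ≤ p j)
    (hsum : Summable p) :
    ∀ t : ℝ, 0 ≤ t →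
      (∑' j : ℕ, (Real.exp (-(t * p j)) - Real.exp (-(2 * t * p j)))) =
        t * ∫ x in Set.Ioi (0 : ℝ),
          Real.exp (-(t * x)) * (({j : ℕ | x / 2 < p j ∧ p j ≤ x}).ncard : ℝ) := by
  intro t ht
  rcases eq_or_lt_of_le ht with rfl | ht
  · simp
  have htne : t ≠ 0 := ne_of_gt ht
  -- finiteness of the sets
  have htend : Filter.Tendsto p Filter.atTop (nhds 0) := hsum.tendsto_atTop_zero
  have hfin : ∀ x : ℝ, 0 < x → ({j : ℕ | x / 2 < p j ∧ p j ≤ x}).Finite := by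
    intro x hx
    have hev : ∀ᶠ j in Filter.atTop, p j < x / 2 :=
      htend.eventually (Filter.Tendsto.eventually_lt_const (half_pos hx) Filter.tendsto_id)
    rw [← Nat.cofinite_eq_atTop] at hev
    exact (Filter.eventually_cofinite.mp hev).subset
      (fun j hj => not_lt.mpr (le_of_lt hj.1))
  -- the family of functions
  set f : ℕ → ℝ → ℝ := fun j x =>
    Set.indicator (Set.Ico (p j) (2 * p j)) (fun x => Real.exp (-(t * x))) x with hf
  have hmeas : ∀ j, AEStronglyMeasurable (f j) (volume.restrict (Set.Ioi (0:ℝ))) := by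
    intro j
    exact ((Real.continuous_exp.comp (continuous_const.mul continuous_id).neg
      ).aestronglyMeasurable.indicator measurableSet_Ico)
  -- interval integral computation
  have hint : ∀ a b : ℝ, ∫ x in a..b, Real.exp (-(t * x)) =
      Real.exp (-(t * a)) / t - Real.exp (-(t * b)) / t := by
    intro a b
    have hderiv : ∀ x : ℝ, HasDerivAt (fun y => -(Real.exp (-(t * y)) / t))
        (Real.exp (-(t * x))) x := by
      intro x
      have h1 : HasDerivAt (fun y : ℝ => -(t * y)) (-t) x := by
        simpa using ((hasDerivAt_id x).const_mul t).fun_neg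
      have h2 := (h1.exp.div_const t).fun_neg
      refine h2.congr_deriv ?_
      field_simp
    rw [intervalIntegral.integral_eq_sub_of_hasDerivAt (fun x _ => hderiv x)
      (Continuous.intervalIntegrable (by continuity) a b)]
    ring
  -- integral of each f j
  have hIco : ∀ j, ∫ x in Set.Ico (p j) (2 * p j), Real.exp (-(t * x)) =
      (Real.exp (-(t * p j)) - Real.exp (-(2 * t * p j))) / t := by
    intro j
    have hle : p j ≤ 2 * p j := by nlinarith [hpos j]
    rw [MeasureTheory.integral_Ico_eq_integral_Ioo,
      ← MeasureTheory.integral_Ioc_eq_integral_Ioo,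
      ← intervalIntegral.integral_of_le hle, hint]
    rw [show -(t * (2 * p j)) = -(2 * t * p j) by ring]
    ring
  have hintf : ∀ j, ∫ x in Set.Ioi (0:ℝ), f j x =
      (Real.exp (-(t * p j)) - Real.exp (-(2 * t * p j))) / t := by
    intro j
    rw [hf]
    rw [MeasureTheory.integral_indicator measurableSet_Ico,
      Measure.restrict_restrict measurableSet_Ico]
    have : Set.Ico (p j) (2 * p j) ∩ Set.Ioi (0:ℝ) = Set.Ico (p j) (2 * p j) := by
      apply Set.inter_eq_self_of_subset_left
      intro x hx
      exact lt_of_lt_of_le (hpos j) hx.1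
    rw [this, hIco]
  -- summability bound for swapping
  have hbound : ∑' j, ∫⁻ x in Set.Ioi (0:ℝ), ‖f j x‖₊ ∂volume ≠ ⊤ := by
    have hle : ∀ j, ∫⁻ x in Set.Ioi (0:ℝ), ‖f j x‖₊ ∂volume ≤ ENNReal.ofReal (p j) := by
      intro j
      calc ∫⁻ x in Set.Ioi (0:ℝ), ‖f j x‖₊ ∂volume
          ≤ ∫⁻ x, ‖f j x‖₊ ∂volume :=
            lintegral_mono' Measure.restrict_le_self le_rfl
        _ ≤ ∫⁻ x, (Set.Ico (p j) (2 * p j)).indicator (fun _ => (1:ENNReal)) x ∂volume := by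
            apply lintegral_mono
            intro x
            rw [hf]
            by_cases hx : x ∈ Set.Ico (p j) (2 * p j)
            · simp only [Set.indicator_of_mem hx]
              refine le_trans ?_ le_rfl
              have hxpos : 0 ≤ x := le_of_lt (lt_of_lt_of_le (hpos j) hx.1)
              have : Real.exp (-(t * x)) ≤ 1 := by
                apply Real.exp_le_one_iff.mpr
                nlinarith
              simp only [ENNReal.coe_le_one_iff]
              rw [← NNReal.coe_le_coe]
              simpa [Real.norm_eq_abs, abs_of_nonneg (Real.exp_nonneg _)] using this
            · simp [Set.indicator_of_notMem hx]
        _ = volume (Set.Ico (p j) (2 * p j)) := by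
            rw [lintegral_indicator measurableSet_Ico]; simp
        _ = ENNReal.ofReal (2 * p j - p j) := by rw [Real.volume_Ico]
        _ = ENNReal.ofReal (p j) := by ring_nf
    apply ne_of_lt
    calc ∑' j, ∫⁻ x in Set.Ioi (0:ℝ), ‖f j x‖₊ ∂volume
        ≤ ∑' j, ENNReal.ofReal (p j) := ENNReal.tsum_le_tsum hle
      _ = ENNReal.ofReal (∑' j, p j) :=
          (ENNReal.ofReal_tsum_of_nonneg (fun j => (hpos j).le) hsum).symm
      _ < ⊤ := ENNReal.ofReal_lt_top
  -- pointwise identity on Ioi 0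
  have hpt : ∀ x ∈ Set.Ioi (0:ℝ),
      Real.exp (-(t * x)) * (({j : ℕ | x / 2 < p j ∧ p j ≤ x}).ncard : ℝ) =
        ∑' j, f j x := by
    intro x hx
    have hx0 : (0:ℝ) < x := hx
    have hA := hfin x hx0
    have hAset : ∀ j, x ∈ Set.Ico (p j) (2 * p j) ↔ (x / 2 < p j ∧ p j ≤ x) := by
      intro j
      constructor
      · rintro ⟨h1, h2⟩; exact ⟨by linarith, h1⟩
      · rintro ⟨h1, h2⟩; exact ⟨h2, by linarith⟩
    have hzero : ∀ j ∉ hA.toFinset, f j x = 0 := by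
      intro j hj
      rw [hf]
      apply Set.indicator_of_notMem
      rw [hAset j]
      simpa using hj
    rw [tsum_eq_sum hzero]
    have hsumeq : ∑ j ∈ hA.toFinset, f j x =
        ∑ j ∈ hA.toFinset, Real.exp (-(t * x)) := by
      apply Finset.sum_congr rfl
      intro j hj
      rw [hf]
      apply Set.indicator_of_mem
      rw [hAset j]
      simpa using hj
    rw [hsumeq, Finset.sum_const, nsmul_eq_mul, mul_comm]
    congr 2
    rw [Set.ncard_eq_toFinset_card _ hA]
  -- put it together
  rw [MeasureTheory.setIntegral_congr_fun measurableSet_Ioi hpt,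
    MeasureTheory.integral_tsum hmeas hbound]
  rw [tsum_congr hintf, ← tsum_mul_left]
  apply tsum_congr
  intro j
  field_simp
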